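/- There is no transitive and reflexive Kripke model M (over propositional variables Y_r, r ∈ R, with the axiom that exactly one Y_r holds in each world) and world w such that M,w ⊨ □σ, where σ := ⋁_{d∈D} (⟨T=d⟩ ∧ ◇⟨T>d⟩). Equivalently, ¬□σ is valid in all transitive reflexive models satisfying (Ax_{=1}) in every world. -/

import Mathlib

/-- Propositional modal formulas over the variables `Y_r`, `r ∈ R = Fin 6`
(`0 = Mo, 1 = Tu, 2 = We, 3 = Th, 4 = Fr, 5 = none`). -/
inductive MForm : Type where
  | bot : MForm
  | var : Fin 6 → MForm
  | imp : MForm → MForm → MForm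
  | box : MForm → MForm
deriving DecidableEq

def MForm.neg (φ : MForm) : MForm := φ.imp .bot
def MForm.top : MForm := MForm.neg .bot
def MForm.or (φ ψ : MForm) : MForm := φ.neg.imp ψ
def MForm.and (φ ψ : MForm) : MForm := (φ.imp ψ.neg).neg
/-- `◇φ := ¬□¬φ`. -/
def MForm.dia (φ : MForm) : MForm := (φ.neg.box).neg

/-- A Kripke model with world set `W`: accessibility relation `E` and
valuation `val`. -/
structure Kripke (W : Type) where
  E : W → W → Prop
  val : W → Fin 6 → Prop

/-- Satisfaction `M, w ⊨ φ`. -/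
def MSat {W : Type} (M : Kripke W) : W → MForm → Prop
  | _, .bot => False
  | w, .var i => M.val w i
  | w, .imp φ ψ => MSat M w φ → MSat M w ψ
  | w, .box φ => ∀ w', M.E w w' → MSat M w' φ

def bigOrM (l : List MForm) : MForm := l.foldr MForm.or .bot

/-- `⟨T > d⟩ = ⋁_{r > d} Y_r`. -/
def TGtM (d : Fin 6) : MForm :=
  bigOrM (((List.finRange 6).filter (fun r => d < r)).map MForm.var)

/-- `σ := ⋁_{d ∈ D} (⟨T = d⟩ ∧ ◇⟨T > d⟩)`, the "surprising test" formula. -/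
def sigmaM : MForm :=
  bigOrM (((List.finRange 6).filter (fun d => d.val < 5)).map
    (fun d => (MForm.var d).and (MForm.dia (TGtM d))))

open Classical in
lemma bigOr_sat {W : Type} (M : Kripke W) (v : W) :
    ∀ l : List MForm, MSat M v (bigOrM l) → ∃ φ ∈ l, MSat M v φ := by
  intro l
  induction l with
  | nil => intro h; exact absurd h (by simp [bigOrM, MSat])
  | cons φ rest ih =>
    intro h
    by_cases hφ : MSat M v φ
    · exact ⟨φ, List.mem_cons_self, hφ⟩
    · obtain ⟨ψ, hm, hs⟩ := ih (h hφ)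
      exact ⟨ψ, List.mem_cons_of_mem _ hm, hs⟩

open Classical in
lemma and_sat {W : Type} (M : Kripke W) (v : W) (φ ψ : MForm)
    (h : MSat M v (φ.and ψ)) : MSat M v φ ∧ MSat M v ψ := by
  by_cases hφ : MSat M v φ
  · by_cases hψ : MSat M v ψ
    · exact ⟨hφ, hψ⟩
    · exact absurd (fun _ hy => hψ hy) h
  · exact absurd (fun hx => absurd hx hφ) h

open Classical in
lemma dia_sat {W : Type} (M : Kripke W) (v : W) (φ : MForm)
    (h : MSat M v (MForm.dia φ)) : ∃ v', M.E v v' ∧ MSat M v' φ := by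
  by_contra hc
  push_neg at hc
  exact h (fun v' he hs => hc v' he hs)

open Classical in
lemma sigma_unpack {W : Type} (M : Kripke W) (v : W) (h : MSat M v sigmaM) :
    ∃ d : Fin 6, d.val < 5 ∧ M.val v d ∧
      ∃ v', M.E v v' ∧ ∃ r : Fin 6, d < r ∧ M.val v' r := by
  obtain ⟨φ, hm, hs⟩ := bigOr_sat M v _ h
  simp only [sigmaM, List.mem_map] at hm
  obtain ⟨d, hd, rfl⟩ := hm
  rw [List.mem_filter] at hd
  have hd5 : d.val < 5 := by simpa using hd.2
  obtain ⟨hval, hdia⟩ := and_sat M v _ _ hs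
  obtain ⟨v', he, hgt⟩ := dia_sat M v _ hdia
  obtain ⟨ψ, hm2, hs2⟩ := bigOr_sat M v' _ hgt
  simp only [TGtM, List.mem_map] at hm2
  obtain ⟨r, hr, rfl⟩ := hm2
  rw [List.mem_filter] at hr
  have hdr : d < r := by simpa using hr.2
  exact ⟨d, hd5, hval, v', he, r, hdr, hs2⟩

/-- No world of a transitive and reflexive Kripke model in which each world is
an `r`-world for exactly one run `r` (axiom `(Ax_{=1})` holds everywhere)
satisfies `□σ`; i.e. `¬□σ` is valid in all such models. -/
theorem stmt_16 {W : Type} (M : Kripke W) (ht : Transitive M.E)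
    (hr : Reflexive M.E) (hone : ∀ w : W, ∃! r : Fin 6, M.val w r) (w : W) :
    ¬ MSat M w (MForm.box sigmaM) := by
  intro hbox
  -- day of a world
  have key : ∀ n : ℕ, ∀ v : W, M.E w v → ∀ d : Fin 6, M.val v d → 5 - d.val ≤ n → False := by
    intro n
    induction n with
    | zero =>
      intro v hv d hd hle
      obtain ⟨d', hd5, hval, _⟩ := sigma_unpack M v (hbox v hv)
      have : d' = d := (hone v).unique hval hd
      omega
    | succ n ih =>
      intro v hv d hd hle
      obtain ⟨d', hd5, hval, v', he, r, hdr, hvr⟩ := sigma_unpack M v (hbox v hv)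
      have hdd : d' = d := (hone v).unique hval hd
      subst hdd
      have : M.E w v' := ht hv he
      have hrn : 5 - r.val ≤ n := by
        have := hdr
        have h6 := r.isLt
        omega
      exact ih v' this r hvr hrn
  exact key 5 w (hr w) (hone w).exists.choose (hone w).exists.choose_spec (by omega)
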